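/- arXiv:2304.05070 — 3 statements merged into one kernel-verified Lean document; each statement's English description precedes it below -/
import Mathlib

section
/- Let S be a schema and T a graph transformation that is trimmed modulo S and satisfies (T,S) ⊨ ⊤ ⊑ ⊔Γ_T. Let 𝒯 be the set of all L0 statements over Γ_T and Σ_T that are satisfied by every graph in the family { T(G) : G ∈ L(S) }. Then 𝒯 is coherent, so there is a unique schema S' over Γ_T and Σ_T with T_{S'} = 𝒯, and this S' is the containment-minimal schema over Γ_T and Σ_T such that T(G) ∈ L(S') for every G ∈ L(S): indeed T(G) ∈ L(S') for all G ∈ L(S), and L(S') ⊆ L(S'') for every schema S'' over Γ_T and Σ_T with T(G) ∈ L(S'') for all G ∈ L(S). -/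
namespace GDB

/-! ## Signed roles (two-way edge labels) -/

/-- A signed role: an edge label traversed forwards or backwards. -/
inductive SRole (E : Type) : Type
  | fwd (r : E)
  | bwd (r : E)

/-- The underlying edge label of a signed role. -/
def SRole.base {E : Type} : SRole E → E
  | .fwd r => r
  | .bwd r => r

/-- The inverse of a signed role. -/
def SRole.inv {E : Type} : SRole E → SRole E
  | .fwd r => .bwd r
  | .bwd r => .fwd r

/-! ## Graphs -/

/-- A graph over node labels `N` and edge labels `E`; nodes are drawn from
the countably infinite set of node identifiers `ℕ`. -/
structure Graph (N E : Type) : Type where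
  dom : Set ℕ
  nodeLab : N → Set ℕ
  edgeRel : E → Set (ℕ × ℕ)
  nodeLab_sub : ∀ A, nodeLab A ⊆ dom
  edgeRel_dom : ∀ r u v, (u, v) ∈ edgeRel r → u ∈ dom ∧ v ∈ dom

namespace Graph

variable {N E : Type}

/-- Interpretation of a signed role. -/
def srel (G : Graph N E) : SRole E → Set (ℕ × ℕ)
  | .fwd r => G.edgeRel r
  | .bwd r => {p | (p.2, p.1) ∈ G.edgeRel r}

/-- A graph is finite if its domain is finite and all but finitely many labels
have empty interpretation. -/
def Finite (G : Graph N E) : Prop :=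
  G.dom.Finite ∧ {A | G.nodeLab A ≠ ∅}.Finite ∧ {r | G.edgeRel r ≠ ∅}.Finite

/-- The `R`-successors of node `u` that carry label `B`. -/
def succ (G : Graph N E) (R : SRole E) (B : N) (u : ℕ) : Set ℕ :=
  {v | (u, v) ∈ G.srel R ∧ v ∈ G.nodeLab B}

/-- A graph is over node labels `Γ₀` and edge labels `σ₀` if it uses no label
outside of these sets. -/
def Over (G : Graph N E) (Γ₀ : Set N) (σ₀ : Set E) : Prop :=
  (∀ A, A ∉ Γ₀ → G.nodeLab A = ∅) ∧ (∀ r, r ∉ σ₀ → G.edgeRel r = ∅)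

/-- The set of (labelled) edges of a graph, as triples. -/
def edgeTriples (G : Graph N E) : Set (E × ℕ × ℕ) :=
  {t | (t.2.1, t.2.2) ∈ G.edgeRel t.1}

/-- Undirected adjacency. -/
def Adj (G : Graph N E) (u v : ℕ) : Prop :=
  ∃ r, (u, v) ∈ G.edgeRel r ∨ (v, u) ∈ G.edgeRel r

/-- The graph is connected (as an undirected multigraph). -/
def ConnectedG (G : Graph N E) : Prop :=
  ∀ u ∈ G.dom, ∀ v ∈ G.dom, Relation.ReflTransGen G.Adj u v

/-- The graph is acyclic (as an undirected multigraph): there is no closed walk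
using pairwise distinct edges. -/
def AcyclicG (G : Graph N E) : Prop :=
  ¬ ∃ (k : ℕ) (es : Fin (k + 1) → E × ℕ × ℕ) (vs : Fin (k + 2) → ℕ),
      Function.Injective es ∧ vs 0 = vs (Fin.last (k + 1)) ∧
      ∀ i : Fin (k + 1), es i ∈ G.edgeTriples ∧
        ((es i).2 = (vs i.castSucc, vs i.succ) ∨ (es i).2 = (vs i.succ, vs i.castSucc))

/-- The degree of a node: the number of incident edges, a loop contributing 2. -/
noncomputable def degree (G : Graph N E) (u : ℕ) : ℕ :=
  {p : (E × ℕ × ℕ) × Bool |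
      p.1 ∈ G.edgeTriples ∧ (if p.2 then p.1.2.1 = u else p.1.2.2 = u)}.ncard

/-- The node `u` has finitely many incident edges. -/
def FinBranching (G : Graph N E) (u : ℕ) : Prop :=
  {t | t ∈ G.edgeTriples ∧ (t.2.1 = u ∨ t.2.2 = u)}.Finite

/-- The subgraph of `G` induced by the set `X` of nodes. -/
def induce (G : Graph N E) (X : Set ℕ) : Graph N E where
  dom := G.dom ∩ X
  nodeLab A := G.nodeLab A ∩ X
  edgeRel r := {p | p ∈ G.edgeRel r ∧ p.1 ∈ X ∧ p.2 ∈ X}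
  nodeLab_sub := by
    intro A u hu
    exact ⟨G.nodeLab_sub A hu.1, hu.2⟩
  edgeRel_dom := by
    intro r u v h
    exact ⟨⟨(G.edgeRel_dom r u v h.1).1, h.2.1⟩, ⟨(G.edgeRel_dom r u v h.1).2, h.2.2⟩⟩

/-- Expand a graph with an additional assignment of sets of nodes to node labels. -/
def expand (G : Graph N E) (ext : N → Set ℕ) : Graph N E where
  dom := G.dom
  nodeLab A := G.nodeLab A ∪ (ext A ∩ G.dom)
  edgeRel := G.edgeRel
  nodeLab_sub := by
    intro A u hu
    rcases hu with h | h
    · exact G.nodeLab_sub A h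
    · exact h.2
  edgeRel_dom := G.edgeRel_dom

end Graph

/-! ## Schemas with participation constraints -/

/-- Participation constraint symbols: `?`, `1`, `+`, `*`, `0`. -/
inductive Card : Type
  | opt   -- ?
  | one   -- 1
  | plus  -- +
  | star  -- *
  | zero  -- 0

/-- The set of cardinalities allowed by each participation constraint symbol. -/
def Card.allowed : Card → Set ℕ
  | .opt => {0, 1}
  | .one => {1}
  | .plus => {n | 1 ≤ n}
  | .star => Set.univ
  | .zero => {0}

/-- A set of successors satisfies a participation constraint. -/
def Card.ok (c : Card) (s : Set ℕ) : Prop :=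
  c = Card.star ∨ (s.Finite ∧ s.ncard ∈ c.allowed)

/-- The preorder on participation constraints: containment of allowed cardinalities. -/
def Card.le (c d : Card) : Prop := c.allowed ⊆ d.allowed

/-- A schema: finite sets of allowed node and edge labels and participation
constraints. -/
structure Schema (N E : Type) : Type where
  nlab : Finset N
  elabs : Finset E
  delta : N → SRole E → N → Card

/-- A schema is over `Γ₀` and `σ₀`: its label sets are `Γ₀` and `σ₀` (and its
participation-constraint function is trivial outside of its intended domain
`Γ₀ × σ₀± × Γ₀`, encoding a function with that restricted domain). -/
def Schema.Over {N E : Type} (S : Schema N E) (Γ₀ : Set N) (σ₀ : Set E) : Prop :=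
  (↑S.nlab : Set N) = Γ₀ ∧ (↑S.elabs : Set E) = σ₀ ∧
  ∀ (A : N) (R : SRole E) (B : N),
    ¬(A ∈ Γ₀ ∧ SRole.base R ∈ σ₀ ∧ B ∈ Γ₀) → S.delta A R B = Card.star

/-- A graph conforms to a schema: every node has exactly one label, which is
an allowed node label, every edge label is allowed, and all participation
constraints hold. -/
def Conforms {N E : Type} (G : Graph N E) (S : Schema N E) : Prop :=
  (∀ u ∈ G.dom, ∃! A, u ∈ G.nodeLab A) ∧
  (∀ A, (G.nodeLab A).Nonempty → A ∈ S.nlab) ∧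
  (∀ r, (G.edgeRel r).Nonempty → r ∈ S.elabs) ∧
  (∀ A ∈ S.nlab, ∀ B ∈ S.nlab, ∀ R : SRole E, SRole.base R ∈ S.elabs →
    ∀ u ∈ G.nodeLab A, Card.ok (S.delta A R B) (G.succ R B u))

/-- The set of finite graphs conforming to a schema. -/
def L {N E : Type} (S : Schema N E) : Set (Graph N E) :=
  {G | Graph.Finite G ∧ Conforms G S}

/-! ## ALCIF concepts and TBoxes -/

/-- ALCIF concepts. -/
inductive Concept (N E : Type) : Type
  | bot
  | atom (A : N)
  | inter (C D : Concept N E)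
  | neg (C : Concept N E)
  | ex (R : SRole E) (C : Concept N E)
  | le1 (R : SRole E) (C : Concept N E)

/-- Interpretation of ALCIF concepts in a graph. -/
def Concept.interp {N E : Type} (G : Graph N E) : Concept N E → Set ℕ
  | .bot => ∅
  | .atom A => G.nodeLab A
  | .inter C D => Concept.interp G C ∩ Concept.interp G D
  | .neg C => G.dom \ Concept.interp G C
  | .ex R C => {u | u ∈ G.dom ∧ ∃ v, (u, v) ∈ G.srel R ∧ v ∈ Concept.interp G C}
  | .le1 R C => {u | u ∈ G.dom ∧ {v | (u, v) ∈ G.srel R ∧ v ∈ Concept.interp G C}.Subsingleton}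

/-- A concept inclusion. -/
abbrev CI (N E : Type) := Concept N E × Concept N E

/-- A graph satisfies a concept inclusion. -/
def SatCI {N E : Type} (G : Graph N E) (ci : CI N E) : Prop :=
  Concept.interp G ci.1 ⊆ Concept.interp G ci.2

/-- A graph is a model of a TBox. -/
def Models {N E : Type} (G : Graph N E) (T : Set (CI N E)) : Prop :=
  ∀ ci ∈ T, SatCI G ci

/-- The TBox `T_S` corresponding to a schema `S`. -/
def schemaTBox {N E : Type} (S : Schema N E) : Set (CI N E) :=
  {ci | ∃ A ∈ S.nlab, ∃ B ∈ S.nlab, ∃ R : SRole E, SRole.base R ∈ S.elabs ∧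
    (((S.delta A R B = Card.one ∨ S.delta A R B = Card.plus) ∧
        ci = (Concept.atom A, Concept.ex R (Concept.atom B))) ∨
     ((S.delta A R B = Card.one ∨ S.delta A R B = Card.opt ∨ S.delta A R B = Card.zero) ∧
        ci = (Concept.atom A, Concept.le1 R (Concept.atom B))) ∨
     (S.delta A R B = Card.zero ∧
        ci = (Concept.atom A, Concept.neg (Concept.ex R (Concept.atom B)))))}

/-- `T̂_S`: the schema TBox together with disjointness of distinct node labels. -/
def hatTBox {N E : Type} (S : Schema N E) : Set (CI N E) :=
  schemaTBox S ∪ {ci | ∃ A ∈ S.nlab, ∃ B ∈ S.nlab, A ≠ B ∧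
    ci = (Concept.inter (Concept.atom A) (Concept.atom B), Concept.bot)}

/-! ## L0 statements -/

/-- L0 statements: `A ⊑ ∃R.B`, `A ⊑ ∄R.B`, `A ⊑ ∃≤1 R.B`. -/
inductive L0Stmt (N E : Type) : Type
  | exis (A : N) (R : SRole E) (B : N)
  | nex (A : N) (R : SRole E) (B : N)
  | le1 (A : N) (R : SRole E) (B : N)

/-- Satisfaction of an L0 statement in a graph. -/
def L0Sat {N E : Type} (G : Graph N E) : L0Stmt N E → Prop
  | .exis A R B => ∀ u ∈ G.nodeLab A, ∃ v, (u, v) ∈ G.srel R ∧ v ∈ G.nodeLab B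
  | .nex A R B => ∀ u ∈ G.nodeLab A, ¬ ∃ v, (u, v) ∈ G.srel R ∧ v ∈ G.nodeLab B
  | .le1 A R B => ∀ u ∈ G.nodeLab A, (G.succ R B u).Subsingleton

/-- An L0 statement is over node labels `Γ₀` and edge labels `σ₀`. -/
def L0Stmt.Over {N E : Type} (st : L0Stmt N E) (Γ₀ : Set N) (σ₀ : Set E) : Prop :=
  match st with
  | .exis A R B => A ∈ Γ₀ ∧ SRole.base R ∈ σ₀ ∧ B ∈ Γ₀
  | .nex A R B => A ∈ Γ₀ ∧ SRole.base R ∈ σ₀ ∧ B ∈ Γ₀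
  | .le1 A R B => A ∈ Γ₀ ∧ SRole.base R ∈ σ₀ ∧ B ∈ Γ₀

/-- Coherence of an L0 TBox. -/
def Coherent {N E : Type} (T : Set (L0Stmt N E)) : Prop :=
  (∀ (A : N) (R : SRole E) (B : N),
      ¬(L0Stmt.exis A R B ∈ T ∧ L0Stmt.nex A R B ∈ T)) ∧
  (∀ (A : N) (R : SRole E) (B : N), L0Stmt.nex A R B ∈ T → L0Stmt.le1 A R B ∈ T)

/-- The L0 TBox corresponding to a schema. -/
def schemaL0 {N E : Type} (S : Schema N E) : Set (L0Stmt N E) :=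
  {st | ∃ A ∈ S.nlab, ∃ B ∈ S.nlab, ∃ R : SRole E, SRole.base R ∈ S.elabs ∧
    (((S.delta A R B = Card.one ∨ S.delta A R B = Card.plus) ∧ st = L0Stmt.exis A R B) ∨
     ((S.delta A R B = Card.one ∨ S.delta A R B = Card.opt ∨ S.delta A R B = Card.zero) ∧
        st = L0Stmt.le1 A R B) ∨
     (S.delta A R B = Card.zero ∧ st = L0Stmt.nex A R B))}

/-! ## Two-way regular path expressions and C2RPQs -/

/-- Two-way regular path expressions. -/
inductive RE (N E : Type) : Type
  | empty
  | eps
  | atom (A : N)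
  | role (R : SRole E)
  | comp (e f : RE N E)
  | plus (e f : RE N E)
  | star (e : RE N E)

/-- Semantics of a two-way regular path expression: the binary relation of
pairs of nodes connected by a witnessing path. -/
def RE.sem {N E : Type} (G : Graph N E) : RE N E → Set (ℕ × ℕ)
  | .empty => ∅
  | .eps => {p | p.1 = p.2 ∧ p.1 ∈ G.dom}
  | .atom A => {p | p.1 = p.2 ∧ p.1 ∈ G.nodeLab A}
  | .role R => G.srel R
  | .comp e f => {p | ∃ w, (p.1, w) ∈ RE.sem G e ∧ (w, p.2) ∈ RE.sem G f}
  | .plus e f => RE.sem G e ∪ RE.sem G f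
  | .star e => {p | p.1 ∈ G.dom ∧ Relation.ReflTransGen (fun a b => (a, b) ∈ RE.sem G e) p.1 p.2}

/-- The node labels occurring in a two-way regular path expression. -/
def RE.nlabels {N E : Type} : RE N E → Set N
  | .atom A => {A}
  | .comp e f => RE.nlabels e ∪ RE.nlabels f
  | .plus e f => RE.nlabels e ∪ RE.nlabels f
  | .star e => RE.nlabels e
  | _ => ∅

/-- A C2RPQ with free variables `V`: a finite conjunction of atoms `φ(z, z')`
whose variables are either free (`V`) or among `n` existentially quantified
variables. A Boolean C2RPQ is one with `V = Empty`. -/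
structure C2RPQ (N E : Type) (V : Type) : Type where
  n : ℕ
  atoms : List (RE N E × ((V ⊕ Fin n) × (V ⊕ Fin n)))

/-- The answers of a C2RPQ in a graph: assignments of nodes to the free
variables that can be extended to the existential variables so that all atoms
are satisfied. -/
def C2RPQ.answers {N E V : Type} (q : C2RPQ N E V) (G : Graph N E) : Set (V → ℕ) :=
  {t | (∀ v, t v ∈ G.dom) ∧ ∃ s : Fin q.n → ℕ, (∀ i, s i ∈ G.dom) ∧
    ∀ a ∈ q.atoms, (Sum.elim t s a.2.1, Sum.elim t s a.2.2) ∈ RE.sem G a.1}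

/-- Answers of a union of C2RPQs. -/
def UAnswers {N E V : Type} (Q : List (C2RPQ N E V)) (G : Graph N E) : Set (V → ℕ) :=
  {t | ∃ q ∈ Q, t ∈ q.answers G}

/-- A trivial atom: `∅(x,x)`, `ε(x,x)` or `A(x,x)`. -/
def TrivialAtom {N E α : Type} (a : RE N E × α × α) : Prop :=
  a.2.1 = a.2.2 ∧ (a.1 = RE.empty ∨ a.1 = RE.eps ∨ ∃ A, a.1 = RE.atom A)

/-- Acyclicity of a C2RPQ: the multigraph on its variables with one edge per
non-trivial atom has no path of pairwise distinct edges visiting a node twice. -/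
def C2RPQ.Acyclic {N E V : Type} (q : C2RPQ N E V) : Prop :=
  ¬ ∃ (k : ℕ) (es : Fin (k + 1) → Fin q.atoms.length) (vs : Fin (k + 2) → V ⊕ Fin q.n),
      Function.Injective es ∧ (∃ i j : Fin (k + 2), i ≠ j ∧ vs i = vs j) ∧
      ∀ i : Fin (k + 1), ¬ TrivialAtom (q.atoms.get (es i)) ∧
        ((q.atoms.get (es i)).2 = (vs i.castSucc, vs i.succ) ∨
         (q.atoms.get (es i)).2 = (vs i.succ, vs i.castSucc))

/-- Adjacency of variables in the multigraph of a C2RPQ. -/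
def C2RPQ.VarAdj {N E V : Type} (q : C2RPQ N E V) (x y : V ⊕ Fin q.n) : Prop :=
  ∃ a ∈ q.atoms, (a.2 = (x, y) ∨ a.2 = (y, x))

/-- Connectedness of the multigraph of a C2RPQ. -/
def C2RPQ.Connected {N E V : Type} (q : C2RPQ N E V) : Prop :=
  ∀ x y : V ⊕ Fin q.n, Relation.ReflTransGen q.VarAdj x y

/-- A unary 2RPQ: a single-atom query of the form `∃y. φ(x,y)` or `∃y. φ(y,x)`. -/
def IsUnary2RPQ {N E : Type} (q : C2RPQ N E (Fin 1)) : Prop :=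
  ∃ φ : RE N E,
    q = ⟨1, [(φ, (Sum.inl (0 : Fin 1), Sum.inr (0 : Fin 1)))]⟩ ∨
    q = ⟨1, [(φ, (Sum.inr (0 : Fin 1), Sum.inl (0 : Fin 1)))]⟩

/-- A Boolean 2RPQ: a Boolean query with a single atom. -/
def IsBoolean2RPQ {N E : Type} (q : C2RPQ N E Empty) : Prop :=
  ∃ (φ : RE N E) (z z' : Empty ⊕ Fin q.n), q.atoms = [(φ, (z, z'))]

/-! ## The query rewriting `P̂` -/

/-- The disjunction `A₁ + ⋯ + A_n` of all node labels of a schema. -/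
noncomputable def labelUnion {N E : Type} (S : Schema N E) : RE N E :=
  S.nlab.toList.foldr (fun A e => RE.plus (RE.atom A) e) RE.empty

/-- The rewriting of a two-way regular expression: insert the disjunction of
all node labels of `S` before and after every edge label, and replace labels
not in `Γ_S ∪ Σ_S±` by `∅`. -/
noncomputable def RE.hat {N E : Type} [DecidableEq N] [DecidableEq E] (S : Schema N E) : RE N E → RE N E
  | .empty => .empty
  | .eps => .eps
  | .atom A => if A ∈ S.nlab then .atom A else .empty
  | .role R => if SRole.base R ∈ S.elabs then
      .comp (labelUnion S) (.comp (.role R) (labelUnion S)) else .empty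
  | .comp e f => .comp (RE.hat S e) (RE.hat S f)
  | .plus e f => .plus (RE.hat S e) (RE.hat S f)
  | .star e => .star (RE.hat S e)

/-- The rewriting `q̂` of a C2RPQ. -/
noncomputable def C2RPQ.hat {N E V : Type} [DecidableEq N] [DecidableEq E] (S : Schema N E)
    (q : C2RPQ N E V) : C2RPQ N E V :=
  { n := q.n, atoms := q.atoms.map (fun a => (RE.hat S a.1, a.2)) }

/-! ## Graph transformations -/

/-- A family of node constructors: for every node label `A`, an injective
function `f_A : ℕ^{k_A} → ℕ`, the ranges being pairwise disjoint. -/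
structure Constructors (N : Type) : Type where
  arity : N → ℕ
  f : (A : N) → (Fin (arity A) → ℕ) → ℕ
  inj : ∀ A, Function.Injective (f A)
  disj : ∀ A B, A ≠ B → ∀ s t, f A s ≠ f B t

/-- A node rule `A(f_A(x̄)) ← q(x̄)` with acyclic body. -/
structure NodeRule (N E : Type) (F : Constructors N) : Type where
  head : N
  body : C2RPQ N E (Fin (F.arity head))
  acyc : body.Acyclic

/-- An edge rule `r(f_A(x̄), f_B(ȳ)) ← q(x̄, ȳ)` with acyclic body. -/
structure EdgeRule (N E : Type) (F : Constructors N) : Type where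
  lab : E
  src : N
  tgt : N
  body : C2RPQ N E (Fin (F.arity src) ⊕ Fin (F.arity tgt))
  acyc : body.Acyclic

/-- A graph transformation: a finite set of node and edge rules. -/
structure Transformation (N E : Type) (F : Constructors N) : Type where
  nodeRules : List (NodeRule N E F)
  edgeRules : List (EdgeRule N E F)

variable {N E : Type}

/-- The result of applying a transformation to a graph. -/
def Transformation.apply {F : Constructors N} (T : Transformation N E F)
    (G : Graph N E) : Graph N E where
  dom := {u | (∃ ρ ∈ T.nodeRules, ∃ t ∈ ρ.body.answers G, u = F.f ρ.head t) ∨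
              (∃ ρ ∈ T.edgeRules, ∃ t ∈ ρ.body.answers G,
                 u = F.f ρ.src (fun i => t (Sum.inl i)) ∨
                 u = F.f ρ.tgt (fun i => t (Sum.inr i)))}
  nodeLab A := {u | ∃ ρ ∈ T.nodeRules, ρ.head = A ∧
                  ∃ t ∈ ρ.body.answers G, u = F.f ρ.head t}
  edgeRel r := {p | ∃ ρ ∈ T.edgeRules, ρ.lab = r ∧
                  ∃ t ∈ ρ.body.answers G,
                    p.1 = F.f ρ.src (fun i => t (Sum.inl i)) ∧
                    p.2 = F.f ρ.tgt (fun i => t (Sum.inr i))}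
  nodeLab_sub := by
    rintro A u ⟨ρ, hρ, _, t, ht, rfl⟩
    exact Or.inl ⟨ρ, hρ, t, ht, rfl⟩
  edgeRel_dom := by
    rintro r u v ⟨ρ, hρ, _, t, ht, h1, h2⟩
    exact ⟨Or.inr ⟨ρ, hρ, t, ht, Or.inl h1⟩, Or.inr ⟨ρ, hρ, t, ht, Or.inr h2⟩⟩

/-- The node labels used in heads of rules of a transformation (`Γ_T`). -/
def Transformation.nlabels {F : Constructors N} (T : Transformation N E F) : Set N :=
  {A | (∃ ρ ∈ T.nodeRules, ρ.head = A) ∨ ∃ ρ ∈ T.edgeRules, ρ.src = A ∨ ρ.tgt = A}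

/-- The edge labels used in heads of rules of a transformation (`Σ_T`). -/
def Transformation.elabels {F : Constructors N} (T : Transformation N E F) : Set E :=
  {r | ∃ ρ ∈ T.edgeRules, ρ.lab = r}

/-- Answers of the union `Q_A^T` of the bodies of `A`-node rules. -/
def QAans {F : Constructors N} (T : Transformation N E F) (A : N) (G : Graph N E) :
    Set ((Fin (F.arity A)) → ℕ) :=
  {t | ∃ ρ ∈ T.nodeRules, ∃ h : ρ.head = A,
        (fun i => t (Fin.cast (congrArg F.arity h) i)) ∈ ρ.body.answers G}

/-- Answers of the union `Q_{A,R,B}^T` of the bodies of matching edge rules. -/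
def QABans {F : Constructors N} (T : Transformation N E F)
    (A : N) (R : SRole E) (B : N) (G : Graph N E) :
    Set ((Fin (F.arity A) → ℕ) × (Fin (F.arity B) → ℕ)) :=
  match R with
  | SRole.fwd r =>
      {ts | ∃ ρ ∈ T.edgeRules, ρ.lab = r ∧
        ∃ (h1 : ρ.src = A) (h2 : ρ.tgt = B),
          Sum.elim (fun i => ts.1 (Fin.cast (congrArg F.arity h1) i))
                   (fun i => ts.2 (Fin.cast (congrArg F.arity h2) i)) ∈ ρ.body.answers G}
  | SRole.bwd r =>
      {ts | ∃ ρ ∈ T.edgeRules, ρ.lab = r ∧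
        ∃ (h1 : ρ.src = B) (h2 : ρ.tgt = A),
          Sum.elim (fun i => ts.2 (Fin.cast (congrArg F.arity h1) i))
                   (fun i => ts.1 (Fin.cast (congrArg F.arity h2) i)) ∈ ρ.body.answers G}

/-- `(T,S) ⊨ ⊤ ⊑ ⊔Γ_T`: every node of every output graph carries some label in `Γ_T`. -/
def TopCovered {F : Constructors N} (T : Transformation N E F) (S : Schema N E) : Prop :=
  ∀ G ∈ L S, ∀ u ∈ (T.apply G).dom, ∃ A ∈ T.nlabels, u ∈ (T.apply G).nodeLab A

/-- A node rule is productive modulo a schema. -/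
def NodeRule.Productive {F : Constructors N} (ρ : NodeRule N E F) (S : Schema N E) : Prop :=
  ∃ G ∈ L S, (ρ.body.answers G).Nonempty

/-- An edge rule is productive modulo a schema. -/
def EdgeRule.Productive {F : Constructors N} (ρ : EdgeRule N E F) (S : Schema N E) : Prop :=
  ∃ G ∈ L S, (ρ.body.answers G).Nonempty

/-- A transformation is trimmed modulo a schema. -/
def Transformation.Trimmed {F : Constructors N} (T : Transformation N E F)
    (S : Schema N E) : Prop :=
  (∀ ρ ∈ T.nodeRules, ρ.Productive S) ∧
  (∀ ρ ∈ T.edgeRules, ρ.Productive S) ∧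
  (∀ A ∈ T.nlabels, ∃ ρ ∈ T.nodeRules, ρ.head = A) ∧
  (∀ r ∈ T.elabels, ∃ ρ ∈ T.edgeRules, ρ.lab = r)

/-- The set of all L0 statements over `Γ_T`, `Σ_T` satisfied by all outputs of `T`
on inputs conforming to `S`. -/
def elicited {F : Constructors N} (T : Transformation N E F) (S : Schema N E) :
    Set (L0Stmt N E) :=
  {st | L0Stmt.Over st T.nlabels T.elabels ∧ ∀ G ∈ L S, L0Sat (T.apply G) st}

/-! ## Horn-ALCIF -/

/-- Horn-ALCIF concept inclusions; `K`, `K'` are (possibly empty) intersections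
of concept names, represented as lists. -/
inductive HornCI (N E : Type) : Type
  | atom (K : List N) (A : N)                      -- K ⊑ A
  | bot (K : List N)                               -- K ⊑ ⊥
  | all (K : List N) (R : SRole E) (K' : List N)   -- K ⊑ ∀R.K'
  | ex (K : List N) (R : SRole E) (K' : List N)    -- K ⊑ ∃R.K'
  | nex (K : List N) (R : SRole E) (K' : List N)   -- K ⊑ ∄R.K'
  | le1 (K : List N) (R : SRole E) (K' : List N)   -- K ⊑ ∃≤1 R.K'

/-- A node satisfies an intersection of concept names. -/
def conjSat {N E : Type} (G : Graph N E) (K : List N) (u : ℕ) : Prop :=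
  u ∈ G.dom ∧ ∀ A ∈ K, u ∈ G.nodeLab A

/-- Satisfaction of a Horn-ALCIF concept inclusion in a graph. -/
def HornCI.Sat {N E : Type} (G : Graph N E) : HornCI N E → Prop
  | .atom K A => ∀ u, conjSat G K u → u ∈ G.nodeLab A
  | .bot K => ∀ u, ¬ conjSat G K u
  | .all K R K' => ∀ u, conjSat G K u → ∀ v, (u, v) ∈ G.srel R → conjSat G K' v
  | .ex K R K' => ∀ u, conjSat G K u → ∃ v, (u, v) ∈ G.srel R ∧ conjSat G K' v
  | .nex K R K' => ∀ u, conjSat G K u → ¬ ∃ v, (u, v) ∈ G.srel R ∧ conjSat G K' v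
  | .le1 K R K' => ∀ u, conjSat G K u →
      {v | (u, v) ∈ G.srel R ∧ conjSat G K' v}.Subsingleton

/-- The concept names appearing in a Horn-ALCIF concept inclusion. -/
def HornCI.nlabels {N E : Type} : HornCI N E → Set N
  | .atom K A => {B | B ∈ K} ∪ {A}
  | .bot K => {B | B ∈ K}
  | .all K _ K' => {B | B ∈ K} ∪ {B | B ∈ K'}
  | .ex K _ K' => {B | B ∈ K} ∪ {B | B ∈ K'}
  | .nex K _ K' => {B | B ∈ K} ∪ {B | B ∈ K'}
  | .le1 K _ K' => {B | B ∈ K} ∪ {B | B ∈ K'}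

/-- The roles appearing in a Horn-ALCIF concept inclusion. -/
def HornCI.roles {N E : Type} : HornCI N E → Set (SRole E)
  | .atom _ _ => ∅
  | .bot _ => ∅
  | .all _ R _ => {R}
  | .ex _ R _ => {R}
  | .nex _ R _ => {R}
  | .le1 _ R _ => {R}

/-- A graph is a model of a Horn-ALCIF TBox. -/
def HornModels {N E : Type} (G : Graph N E) (T : Set (HornCI N E)) : Prop :=
  ∀ ci ∈ T, ci.Sat G

/-- Unrestricted (finite or infinite) entailment modulo a Horn-ALCIF TBox. -/
def HornEntails {N E : Type} (T : Set (HornCI N E)) (ci : HornCI N E) : Prop :=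
  ∀ G : Graph N E, HornModels G T → ci.Sat G

/-- A finmod cycle `K₁, R₁, …, K_n` (with `K_{n} = K₁`) in a TBox. -/
def IsFinmodCycle {N E : Type} (T : Set (HornCI N E)) (n : ℕ)
    (K : Fin (n + 1) → List N) (R : Fin n → SRole E) : Prop :=
  K (Fin.last n) = K 0 ∧
  ∀ i : Fin n,
    HornEntails T (HornCI.ex (K i.castSucc) (R i) (K i.succ)) ∧
    HornEntails T (HornCI.le1 (K i.succ) (R i).inv (K i.castSucc))

/-- A TBox is closed under reversing finmod cycles. -/
def ReversalClosed {N E : Type} (T : Set (HornCI N E)) : Prop :=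
  ∀ (n : ℕ) (K : Fin (n + 1) → List N) (R : Fin n → SRole E),
    IsFinmodCycle T n K R →
    ∀ i : Fin n,
      HornCI.ex (K i.succ) (R i).inv (K i.castSucc) ∈ T ∧
      HornCI.le1 (K i.castSucc) (R i) (K i.succ) ∈ T

/-- The completion `𝒯*`: the least extension of `𝒯` closed under reversing
finmod cycles (obtained by exhaustively reversing finmod cycles). -/
def completion {N E : Type} (T : Set (HornCI N E)) : Set (HornCI N E) :=
  ⋂₀ {T' | T ⊆ T' ∧ ReversalClosed T'}

/-- A triple `(K, R, K')` is satisfiable modulo a TBox. -/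
def TripleSat {N E : Type} (T : Set (HornCI N E)) (K : List N) (R : SRole E)
    (K' : List N) : Prop :=
  ∃ G : Graph N E, HornModels G T ∧
    ∃ u u', conjSat G K u ∧ (u, u') ∈ G.srel R ∧ conjSat G K' u'

/-- A TBox is S-driven. -/
def SDriven {N E : Type} (S : Schema N E) (T : Set (HornCI N E)) : Prop :=
  (∀ K (R : SRole E) K', HornCI.ex K R K' ∈ T → TripleSat T K R K' →
    ∃ A ∈ S.nlab, ∃ A' ∈ S.nlab, A ∈ K ∧ A' ∈ K' ∧ HornCI.ex [A] R [A'] ∈ T) ∧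
  (∀ K (R : SRole E) K', HornCI.le1 K R K' ∈ T → TripleSat T K R K' →
    ∃ A ∈ S.nlab, ∃ A' ∈ S.nlab, A ∈ K ∧ A' ∈ K' ∧ HornCI.le1 [A] R [A'] ∈ T)

/-! ## Sparsity and skeleta -/

/-- Simple paths in a graph (viewed as an undirected multigraph). -/
structure GPath {N E : Type} (G : Graph N E) : Type where
  len : ℕ
  verts : Fin (len + 1) → ℕ
  edges : Fin len → E × ℕ × ℕ
  verts_mem : ∀ i, verts i ∈ G.dom
  edges_mem : ∀ i, edges i ∈ G.edgeTriples
  conn : ∀ i : Fin len,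
    (edges i).2 = (verts i.castSucc, verts i.succ) ∨
    (edges i).2 = (verts i.succ, verts i.castSucc)

/-- A path is simple: edges are pairwise distinct and no node is repeated,
except that the two endpoints may coincide (forming a cycle). -/
def GPath.Simple {N E : Type} {G : Graph N E} (p : GPath G) : Prop :=
  Function.Injective p.edges ∧
  ∀ i j : Fin (p.len + 1), p.verts i = p.verts j →
    i = j ∨ (i = 0 ∧ j = Fin.last p.len) ∨ (j = 0 ∧ i = Fin.last p.len)

/-- `u` is an endpoint of the path. -/
def GPath.IsEndpoint {N E : Type} {G : Graph N E} (p : GPath G) (u : ℕ) : Prop :=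
  p.verts 0 = u ∨ p.verts (Fin.last p.len) = u

/-- The graph is a `(k, l)`-skeleton: at most `k` distinguished nodes connected
by at most `l` simple paths, pairwise disjoint except possibly at endpoints,
covering all nodes and edges of the graph. -/
def IsSkeleton {N E : Type} (G : Graph N E) (k l : ℕ) : Prop :=
  ∃ (D : Set ℕ) (m : ℕ) (P : Fin m → GPath G),
    D ⊆ G.dom ∧ D.Finite ∧ D.ncard ≤ k ∧ m ≤ l ∧
    (∀ i, (P i).Simple) ∧
    (∀ i, (P i).verts 0 ∈ D ∧ (P i).verts (Fin.last (P i).len) ∈ D) ∧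
    (∀ i j, i ≠ j → ∀ u, u ∈ Set.range (P i).verts → u ∈ Set.range (P j).verts →
      (P i).IsEndpoint u ∧ (P j).IsEndpoint u) ∧
    (∀ u ∈ G.dom, ∃ i, u ∈ Set.range (P i).verts) ∧
    (∀ t ∈ G.edgeTriples, ∃ i a, (P i).edges a = t)

/-- An edge of `G` crossing the boundary of a set `X` of nodes. -/
def Crossing {N E : Type} (G : Graph N E) (X : Set ℕ) (t : E × ℕ × ℕ) : Prop :=
  t ∈ G.edgeTriples ∧ ((t.2.1 ∈ X ∧ t.2.2 ∉ X) ∨ (t.2.1 ∉ X ∧ t.2.2 ∈ X))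

/-- `X` carries a finitely branching tree attached to `base` by a single edge. -/
def IsAttachedTree {N E : Type} (G : Graph N E) (base X : Set ℕ) : Prop :=
  X.Nonempty ∧ X ⊆ G.dom ∧
  (G.induce X).ConnectedG ∧ (G.induce X).AcyclicG ∧
  (∀ u ∈ X, G.FinBranching u) ∧
  (∃! t : E × ℕ × ℕ, Crossing G X t) ∧
  (∀ t, Crossing G X t → (t.2.1 ∈ X → t.2.2 ∈ base) ∧ (t.2.2 ∈ X → t.2.1 ∈ base))

/-- A possibly infinite graph is `c`-sparse: it consists of a finite connected
`c`-sparse graph with finitely many finitely branching trees attached. -/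
def Graph.SparseDecomp {N E : Type} (G : Graph N E) (c : ℕ) : Prop :=
  ∃ (core : Set ℕ) (comps : Set (Set ℕ)),
    core ⊆ G.dom ∧ core.Finite ∧
    (G.induce core).ConnectedG ∧
    (G.induce core).edgeTriples.Finite ∧
    (G.induce core).edgeTriples.ncard ≤ core.ncard + c ∧
    comps.Finite ∧ ⋃₀ comps = G.dom \ core ∧
    (∀ X ∈ comps, ∀ Y ∈ comps, X ≠ Y → Disjoint X Y) ∧
    (∀ X ∈ comps, IsAttachedTree G core X)


/-! ## Auxiliary lemmas for schema elicitation -/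

section Elicitation

variable {N E : Type}

lemma succ_subset_dom (G : Graph N E) (R : SRole E) (B : N) (u : ℕ) :
    G.succ R B u ⊆ G.dom := fun _ hv => G.nodeLab_sub B hv.2

lemma answers_finite {V : Type} [Finite V] (q : C2RPQ N E V) {G : Graph N E}
    (h : G.dom.Finite) : (q.answers G).Finite := by
  have hsub : q.answers G ⊆ Set.pi Set.univ (fun _ : V => G.dom) := by
    intro t ht i _; exact ht.1 i
  exact (Set.Finite.pi (fun _ => h)).subset hsub

lemma apply_dom_finite {F : Constructors N} (T : Transformation N E F) {G : Graph N E}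
    (h : G.dom.Finite) : (T.apply G).dom.Finite := by
  have h1 : (⋃ ρ ∈ {ρ | ρ ∈ T.nodeRules}, F.f ρ.head '' (ρ.body.answers G)).Finite :=
    (T.nodeRules.finite_toSet).biUnion (fun ρ _ => ((answers_finite _ h).image _))
  have h2 : (⋃ ρ ∈ {ρ | ρ ∈ T.edgeRules},
      (F.f ρ.src '' ((fun (t : Fin (F.arity ρ.src) ⊕ Fin (F.arity ρ.tgt) → ℕ) =>
          fun i => t (Sum.inl i)) '' (ρ.body.answers G)) ∪
       F.f ρ.tgt '' ((fun (t : Fin (F.arity ρ.src) ⊕ Fin (F.arity ρ.tgt) → ℕ) =>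
          fun i => t (Sum.inr i)) '' (ρ.body.answers G)))).Finite :=
    (T.edgeRules.finite_toSet).biUnion (fun ρ _ =>
      (((answers_finite _ h).image _).image _).union (((answers_finite _ h).image _).image _))
  refine ((h1.union h2).subset ?_)
  rintro u (⟨ρ, hρ, t, ht, rfl⟩ | ⟨ρ, hρ, t, ht, (rfl | rfl)⟩)
  · exact Or.inl (Set.mem_biUnion hρ ⟨t, ht, rfl⟩)
  · exact Or.inr (Set.mem_biUnion hρ (Or.inl ⟨_, ⟨t, ht, rfl⟩, rfl⟩))
  · exact Or.inr (Set.mem_biUnion hρ (Or.inr ⟨_, ⟨t, ht, rfl⟩, rfl⟩))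

lemma apply_finite {F : Constructors N} (T : Transformation N E F) {G : Graph N E}
    (h : G.Finite) : (T.apply G).Finite := by
  refine ⟨apply_dom_finite T h.1, ?_, ?_⟩
  · refine ((T.nodeRules.finite_toSet).image (fun ρ => ρ.head)).subset ?_
    intro A hA
    obtain ⟨u, ρ, hρ, hh, _⟩ := Set.nonempty_iff_ne_empty.mpr hA
    exact ⟨ρ, hρ, hh⟩
  · refine ((T.edgeRules.finite_toSet).image (fun ρ => ρ.lab)).subset ?_
    intro r hr
    obtain ⟨p, ρ, hρ, hl, _⟩ := Set.nonempty_iff_ne_empty.mpr hr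
    exact ⟨ρ, hρ, hl⟩

lemma apply_label_unique {F : Constructors N} (T : Transformation N E F) (G : Graph N E)
    {u : ℕ} {A B : N} (hA : u ∈ (T.apply G).nodeLab A) (hB : u ∈ (T.apply G).nodeLab B) :
    A = B := by
  obtain ⟨ρ, hρ, rfl, t, ht, rfl⟩ := hA
  obtain ⟨ρ', hρ', hb, t', ht', he⟩ := hB
  by_cases h : ρ.head = ρ'.head
  · rw [h]; exact hb
  · exact absurd he (F.disj _ _ h t t')

/-- Conformance implies satisfaction of the L0 statements of the schema. -/
lemma conforms_L0Sat {G : Graph N E} {S0 : Schema N E} (hG : G ∈ L S0)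
    {st : L0Stmt N E} (hst : st ∈ schemaL0 S0) : L0Sat G st := by
  obtain ⟨hfin, hconf⟩ := hG
  obtain ⟨A, hA, B, hB, R, hR, hc⟩ := hst
  have hfins : ∀ u, (G.succ R B u).Finite := fun u => hfin.1.subset (succ_subset_dom G R B u)
  rcases hc with ⟨hd, rfl⟩ | ⟨hd, rfl⟩ | ⟨hd, rfl⟩
  · intro u hu
    rcases (hconf.2.2.2 A hA B hB R hR u hu : _ ∨ _) with hstar | ⟨_, hn⟩
    · rcases hd with h | h <;> rw [h] at hstar <;> exact Card.noConfusion hstar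
    · have hpos : 0 < (G.succ R B u).ncard := by
        rcases hd with h | h <;> rw [h] at hn <;>
          simp only [Card.allowed, Set.mem_singleton_iff, Set.mem_setOf_eq,
            Set.mem_insert_iff] at hn <;> omega
      obtain ⟨v, hv⟩ := (Set.ncard_pos (hfins u)).mp hpos
      exact ⟨v, hv.1, hv.2⟩
  · intro u hu
    rcases (hconf.2.2.2 A hA B hB R hR u hu : _ ∨ _) with hstar | ⟨_, hn⟩
    · rcases hd with h | h | h <;> rw [h] at hstar <;> exact Card.noConfusion hstar
    · have hle : (G.succ R B u).ncard ≤ 1 := by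
        rcases hd with h | h | h <;> rw [h] at hn <;>
          simp only [Card.allowed, Set.mem_singleton_iff, Set.mem_setOf_eq,
            Set.mem_insert_iff] at hn <;> omega
      intro a ha b hb
      exact (Set.ncard_le_one_iff (hfins u)).mp hle ha hb
  · intro u hu
    rcases (hconf.2.2.2 A hA B hB R hR u hu : _ ∨ _) with hstar | ⟨_, hn⟩
    · rw [hd] at hstar; exact Card.noConfusion hstar
    · rw [hd] at hn
      simp only [Card.allowed, Set.mem_singleton_iff] at hn
      have hemp : G.succ R B u = ∅ := (Set.ncard_eq_zero (hfins u)).mp hn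
      rintro ⟨v, h1, h2⟩
      have hv : v ∈ G.succ R B u := ⟨h1, h2⟩
      rw [hemp] at hv
      exact hv

/-- Satisfaction of the L0 statements of a schema implies the participation
constraints hold. -/
lemma card_ok_of_L0 {G : Graph N E} (hfin : G.dom.Finite) {S₂ : Schema N E}
    (hsat : ∀ st ∈ schemaL0 S₂, L0Sat G st) {A B : N} {R : SRole E}
    (hA : A ∈ S₂.nlab) (hB : B ∈ S₂.nlab) (hR : SRole.base R ∈ S₂.elabs)
    {u : ℕ} (hu : u ∈ G.nodeLab A) : Card.ok (S₂.delta A R B) (G.succ R B u) := by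
  have hsf : (G.succ R B u).Finite := hfin.subset (succ_subset_dom G R B u)
  have hex : (S₂.delta A R B = Card.one ∨ S₂.delta A R B = Card.plus) →
      (G.succ R B u).Nonempty := by
    intro h
    obtain ⟨v, hv1, hv2⟩ := hsat _ ⟨A, hA, B, hB, R, hR, Or.inl ⟨h, rfl⟩⟩ u hu
    exact ⟨v, hv1, hv2⟩
  have hle : (S₂.delta A R B = Card.one ∨ S₂.delta A R B = Card.opt ∨
      S₂.delta A R B = Card.zero) → (G.succ R B u).Subsingleton :=
    fun h => hsat _ ⟨A, hA, B, hB, R, hR, Or.inr (Or.inl ⟨h, rfl⟩)⟩ u hu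
  have hne : S₂.delta A R B = Card.zero → G.succ R B u = ∅ := by
    intro h
    have hx := hsat _ ⟨A, hA, B, hB, R, hR, Or.inr (Or.inr ⟨h, rfl⟩)⟩ u hu
    ext v
    simp only [Set.mem_empty_iff_false, iff_false]
    exact fun hv => hx ⟨v, hv.1, hv.2⟩
  cases hd : S₂.delta A R B
  case star => exact Or.inl rfl
  case one =>
    refine Or.inr ⟨hsf, ?_⟩
    obtain ⟨v, hv⟩ := hex (Or.inl hd)
    have hsing : G.succ R B u = {v} :=
      Set.eq_singleton_iff_unique_mem.mpr ⟨hv, fun b hb => hle (Or.inl hd) hb hv⟩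
    simp [Card.allowed, hsing]
  case plus =>
    refine Or.inr ⟨hsf, ?_⟩
    have := (Set.ncard_pos hsf).mpr (hex (Or.inr hd))
    exact this
  case opt =>
    refine Or.inr ⟨hsf, ?_⟩
    have h1 : (G.succ R B u).ncard ≤ 1 := by
      rcases Set.eq_empty_or_nonempty (G.succ R B u) with he | ⟨v, hv⟩
      · simp [he]
      · have hsing : G.succ R B u = {v} :=
          Set.eq_singleton_iff_unique_mem.mpr
            ⟨hv, fun b hb => hle (Or.inr (Or.inl hd)) hb hv⟩
        simp [hsing]
    simp only [Card.allowed, Set.mem_insert_iff, Set.mem_singleton_iff]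
    omega
  case zero =>
    refine Or.inr ⟨hsf, ?_⟩
    simp [Card.allowed, hne hd]

/-- Coherence of the elicited TBox. -/
lemma elicited_coherent {F : Constructors N} {T : Transformation N E F} {S : Schema N E}
    (htrim : T.Trimmed S) : Coherent (elicited T S) := by
  constructor
  · rintro A R B ⟨h1, h2⟩
    have hA : A ∈ T.nlabels := h1.1.1
    obtain ⟨ρ, hρ, hhead⟩ := htrim.2.2.1 A hA
    obtain ⟨G, hG, t, ht⟩ := htrim.1 ρ hρ
    have hu : F.f ρ.head t ∈ (T.apply G).nodeLab A := ⟨ρ, hρ, hhead, t, ht, rfl⟩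
    obtain ⟨v, hv⟩ := h1.2 G hG _ hu
    exact h2.2 G hG _ hu ⟨v, hv⟩
  · intro A R B hnex
    refine ⟨hnex.1, fun G hG u hu => ?_⟩
    intro a ha b hb
    exact absurd ⟨a, ha.1, ha.2⟩ (hnex.2 G hG u hu)

/-- Characterization of membership of `exis` statements in `schemaL0`. -/
lemma schemaL0_exis_iff {S0 : Schema N E} {A B : N} {R : SRole E}
    (hA : A ∈ S0.nlab) (hB : B ∈ S0.nlab) (hR : SRole.base R ∈ S0.elabs) :
    L0Stmt.exis A R B ∈ schemaL0 S0 ↔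
      (S0.delta A R B = Card.one ∨ S0.delta A R B = Card.plus) := by
  constructor
  · rintro ⟨A', hA', B', hB', R', hR', hc⟩
    rcases hc with ⟨hd, heq⟩ | ⟨hd, heq⟩ | ⟨hd, heq⟩
    · obtain ⟨rfl, rfl, rfl⟩ := L0Stmt.exis.inj heq
      exact hd
    · cases heq
    · cases heq
  · intro hd
    exact ⟨A, hA, B, hB, R, hR, Or.inl ⟨hd, rfl⟩⟩

lemma schemaL0_le1_iff {S0 : Schema N E} {A B : N} {R : SRole E}
    (hA : A ∈ S0.nlab) (hB : B ∈ S0.nlab) (hR : SRole.base R ∈ S0.elabs) :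
    L0Stmt.le1 A R B ∈ schemaL0 S0 ↔
      (S0.delta A R B = Card.one ∨ S0.delta A R B = Card.opt ∨
       S0.delta A R B = Card.zero) := by
  constructor
  · rintro ⟨A', hA', B', hB', R', hR', hc⟩
    rcases hc with ⟨hd, heq⟩ | ⟨hd, heq⟩ | ⟨hd, heq⟩
    · cases heq
    · obtain ⟨rfl, rfl, rfl⟩ := L0Stmt.le1.inj heq
      exact hd
    · cases heq
  · intro hd
    exact ⟨A, hA, B, hB, R, hR, Or.inr (Or.inl ⟨hd, rfl⟩)⟩

lemma schemaL0_nex_iff {S0 : Schema N E} {A B : N} {R : SRole E}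
    (hA : A ∈ S0.nlab) (hB : B ∈ S0.nlab) (hR : SRole.base R ∈ S0.elabs) :
    L0Stmt.nex A R B ∈ schemaL0 S0 ↔ S0.delta A R B = Card.zero := by
  constructor
  · rintro ⟨A', hA', B', hB', R', hR', hc⟩
    rcases hc with ⟨hd, heq⟩ | ⟨hd, heq⟩ | ⟨hd, heq⟩
    · cases heq
    · cases heq
    · obtain ⟨rfl, rfl, rfl⟩ := L0Stmt.nex.inj heq
      exact hd
  · intro hd
    exact ⟨A, hA, B, hB, R, hR, Or.inr (Or.inr ⟨hd, rfl⟩)⟩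

/-- A participation constraint is determined by the three L0 membership facts. -/
lemma card_eq_of_iffs (c d : Card)
    (h1 : (c = Card.one ∨ c = Card.plus) ↔ (d = Card.one ∨ d = Card.plus))
    (h2 : (c = Card.one ∨ c = Card.opt ∨ c = Card.zero) ↔
          (d = Card.one ∨ d = Card.opt ∨ d = Card.zero))
    (h3 : (c = Card.zero) ↔ (d = Card.zero)) : c = d := by
  cases c <;> cases d <;> simp_all

open Classical in
/-- The participation constraints of the elicited schema. -/
noncomputable def elicitDelta {F : Constructors N} (T : Transformation N E F)
    (S : Schema N E) : N → SRole E → N → Card := fun A R B =>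
  if A ∈ T.nlabels ∧ SRole.base R ∈ T.elabels ∧ B ∈ T.nlabels then
    (if L0Stmt.exis A R B ∈ elicited T S then
        (if L0Stmt.le1 A R B ∈ elicited T S then Card.one else Card.plus)
     else if L0Stmt.nex A R B ∈ elicited T S then Card.zero
     else if L0Stmt.le1 A R B ∈ elicited T S then Card.opt else Card.star)
  else Card.star

open Classical in
/-- The elicited schema. -/
noncomputable def elicitSchema {F : Constructors N} (T : Transformation N E F)
    (S : Schema N E) : Schema N E where
  nlab := (T.nodeRules.map (fun ρ => ρ.head) ++ T.edgeRules.map (fun ρ => ρ.src)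
      ++ T.edgeRules.map (fun ρ => ρ.tgt)).toFinset
  elabs := (T.edgeRules.map (fun ρ => ρ.lab)).toFinset
  delta := elicitDelta T S

lemma elicitSchema_nlab_coe {F : Constructors N} (T : Transformation N E F)
    (S : Schema N E) : (((elicitSchema T S).nlab : Finset N) : Set N) = T.nlabels := by
  ext A
  simp only [elicitSchema, Finset.mem_coe, List.mem_toFinset,
    List.mem_append, List.mem_map, Transformation.nlabels, Set.mem_setOf_eq]
  constructor
  · rintro ((⟨ρ, hρ, h⟩ | ⟨ρ, hρ, h⟩) | ⟨ρ, hρ, h⟩)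
    · exact Or.inl ⟨ρ, hρ, h⟩
    · exact Or.inr ⟨ρ, hρ, Or.inl h⟩
    · exact Or.inr ⟨ρ, hρ, Or.inr h⟩
  · rintro (⟨ρ, hρ, h⟩ | ⟨ρ, hρ, h | h⟩)
    · exact Or.inl (Or.inl ⟨ρ, hρ, h⟩)
    · exact Or.inl (Or.inr ⟨ρ, hρ, h⟩)
    · exact Or.inr ⟨ρ, hρ, h⟩

lemma elicitSchema_elabs_coe {F : Constructors N} (T : Transformation N E F)
    (S : Schema N E) : (((elicitSchema T S).elabs : Finset E) : Set E) = T.elabels := by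
  ext r
  simp only [elicitSchema, Finset.mem_coe, List.mem_toFinset, List.mem_map,
    Transformation.elabels, Set.mem_setOf_eq]

lemma elicitDelta_spec {F : Constructors N} (T : Transformation N E F) (S : Schema N E)
    (hcoh : Coherent (elicited T S)) {A B : N} {R : SRole E}
    (h : A ∈ T.nlabels ∧ SRole.base R ∈ T.elabels ∧ B ∈ T.nlabels) :
    ((elicitDelta T S A R B = Card.one ∨ elicitDelta T S A R B = Card.plus) ↔
        L0Stmt.exis A R B ∈ elicited T S) ∧
    ((elicitDelta T S A R B = Card.one ∨ elicitDelta T S A R B = Card.opt ∨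
        elicitDelta T S A R B = Card.zero) ↔ L0Stmt.le1 A R B ∈ elicited T S) ∧
    ((elicitDelta T S A R B = Card.zero) ↔ L0Stmt.nex A R B ∈ elicited T S) := by
  classical
  unfold elicitDelta
  by_cases h1 : L0Stmt.exis A R B ∈ elicited T S <;>
    by_cases h2 : L0Stmt.nex A R B ∈ elicited T S <;>
    by_cases h3 : L0Stmt.le1 A R B ∈ elicited T S <;>
    simp [h, h1, h2, h3]
  · exact absurd ⟨h1, h2⟩ (hcoh.1 A R B)
  · exact absurd ⟨h1, h2⟩ (hcoh.1 A R B)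
  · exact absurd (hcoh.2 A R B h2) h3

lemma elicit_over {F : Constructors N} (T : Transformation N E F) (S : Schema N E) :
    (elicitSchema T S).Over T.nlabels T.elabels := by
  refine ⟨elicitSchema_nlab_coe T S, elicitSchema_elabs_coe T S, ?_⟩
  intro A R B h
  show elicitDelta T S A R B = Card.star
  unfold elicitDelta
  exact if_neg h

lemma mem_nlab_of_elicit {F : Constructors N} {T : Transformation N E F} {S : Schema N E}
    {A : N} (h : A ∈ T.nlabels) : A ∈ (elicitSchema T S).nlab := by
  rw [← Finset.mem_coe, elicitSchema_nlab_coe]; exact h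

lemma mem_elabs_of_elicit {F : Constructors N} {T : Transformation N E F} {S : Schema N E}
    {r : E} (h : r ∈ T.elabels) : r ∈ (elicitSchema T S).elabs := by
  rw [← Finset.mem_coe, elicitSchema_elabs_coe]; exact r |> fun _ => h

lemma elicit_L0 {F : Constructors N} (T : Transformation N E F) (S : Schema N E)
    (hcoh : Coherent (elicited T S)) :
    schemaL0 (elicitSchema T S) = elicited T S := by
  ext st
  constructor
  · rintro ⟨A, hA, B, hB, R, hR, hc⟩
    have htrip : A ∈ T.nlabels ∧ SRole.base R ∈ T.elabels ∧ B ∈ T.nlabels := by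
      refine ⟨?_, ?_, ?_⟩
      · rw [← elicitSchema_nlab_coe T S]; exact hA
      · rw [← elicitSchema_elabs_coe T S]; exact hR
      · rw [← elicitSchema_nlab_coe T S]; exact hB
    obtain ⟨s1, s2, s3⟩ := elicitDelta_spec T S hcoh htrip
    rcases hc with ⟨hd, rfl⟩ | ⟨hd, rfl⟩ | ⟨hd, rfl⟩
    · exact s1.mp hd
    · exact s2.mp hd
    · exact s3.mp hd
  · intro hst
    cases st with
    | exis A R B =>
      have htrip : A ∈ T.nlabels ∧ SRole.base R ∈ T.elabels ∧ B ∈ T.nlabels := hst.1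
      exact ⟨A, mem_nlab_of_elicit htrip.1, B, mem_nlab_of_elicit htrip.2.2, R,
        mem_elabs_of_elicit htrip.2.1,
        Or.inl ⟨(elicitDelta_spec T S hcoh htrip).1.mpr hst, rfl⟩⟩
    | nex A R B =>
      have htrip : A ∈ T.nlabels ∧ SRole.base R ∈ T.elabels ∧ B ∈ T.nlabels := hst.1
      exact ⟨A, mem_nlab_of_elicit htrip.1, B, mem_nlab_of_elicit htrip.2.2, R,
        mem_elabs_of_elicit htrip.2.1,
        Or.inr (Or.inr ⟨(elicitDelta_spec T S hcoh htrip).2.2.mpr hst, rfl⟩)⟩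
    | le1 A R B =>
      have htrip : A ∈ T.nlabels ∧ SRole.base R ∈ T.elabels ∧ B ∈ T.nlabels := hst.1
      exact ⟨A, mem_nlab_of_elicit htrip.1, B, mem_nlab_of_elicit htrip.2.2, R,
        mem_elabs_of_elicit htrip.2.1,
        Or.inr (Or.inl ⟨(elicitDelta_spec T S hcoh htrip).2.1.mpr hst, rfl⟩)⟩

lemma schema_eq_of_fields {S₁ S₂ : Schema N E} (h1 : S₁.nlab = S₂.nlab)
    (h2 : S₁.elabs = S₂.elabs) (h3 : S₁.delta = S₂.delta) : S₁ = S₂ := by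
  cases S₁; cases S₂; simp_all

lemma schema_unique {F : Constructors N} {T : Transformation N E F} {S : Schema N E}
    (hcoh : Coherent (elicited T S)) {S₀ : Schema N E}
    (hover : S₀.Over T.nlabels T.elabels) (hL0 : schemaL0 S₀ = elicited T S) :
    S₀ = elicitSchema T S := by
  refine schema_eq_of_fields
    (Finset.coe_injective (hover.1.trans (elicitSchema_nlab_coe T S).symm))
    (Finset.coe_injective (hover.2.1.trans (elicitSchema_elabs_coe T S).symm)) ?_
  funext A R B
  by_cases htrip : A ∈ T.nlabels ∧ SRole.base R ∈ T.elabels ∧ B ∈ T.nlabels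
  · have hA : A ∈ S₀.nlab := by rw [← Finset.mem_coe, hover.1]; exact htrip.1
    have hB : B ∈ S₀.nlab := by rw [← Finset.mem_coe, hover.1]; exact htrip.2.2
    have hR : SRole.base R ∈ S₀.elabs := by rw [← Finset.mem_coe, hover.2.1]; exact htrip.2.1
    obtain ⟨s1, s2, s3⟩ := elicitDelta_spec T S hcoh htrip
    have i1 := schemaL0_exis_iff hA hB hR
    have i2 := schemaL0_le1_iff hA hB hR
    have i3 := schemaL0_nex_iff hA hB hR
    rw [hL0] at i1 i2 i3
    exact card_eq_of_iffs _ _ (i1.symm.trans s1.symm) (i2.symm.trans s2.symm)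
      (i3.symm.trans s3.symm)
  · rw [hover.2.2 A R B htrip]
    show _ = elicitDelta T S A R B
    unfold elicitDelta
    rw [if_neg htrip]

lemma apply_conforms {F : Constructors N} {T : Transformation N E F} {S : Schema N E}
    (htop : TopCovered T S) {S₀ : Schema N E}
    (hover : S₀.Over T.nlabels T.elabels) (hL0 : schemaL0 S₀ = elicited T S)
    {G : Graph N E} (hG : G ∈ L S) : T.apply G ∈ L S₀ := by
  have hfin : (T.apply G).Finite := apply_finite T hG.1
  refine ⟨hfin, ?_, ?_, ?_, ?_⟩
  · intro u hu
    obtain ⟨A, _, hA⟩ := htop G hG u hu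
    exact ⟨A, hA, fun B hB => apply_label_unique T G hB hA⟩
  · rintro A ⟨u, ρ, hρ, hh, -⟩
    have hmem : A ∈ T.nlabels := Or.inl ⟨ρ, hρ, hh⟩
    rw [← Finset.mem_coe, hover.1]; exact hmem
  · rintro r ⟨p, ρ, hρ, hl, -⟩
    have hmem : r ∈ T.elabels := ⟨ρ, hρ, hl⟩
    rw [← Finset.mem_coe, hover.2.1]; exact hmem
  · intro A hA B hB R hR u hu
    refine card_ok_of_L0 hfin.1 ?_ hA hB hR hu
    intro st hst
    have hmem : st ∈ elicited T S := hL0 ▸ hst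
    exact hmem.2 G hG

lemma schemaL0_sub_elicited {F : Constructors N} {T : Transformation N E F} {S : Schema N E}
    {S₂ : Schema N E} (hover : S₂.Over T.nlabels T.elabels)
    (happ : ∀ G ∈ L S, T.apply G ∈ L S₂) : schemaL0 S₂ ⊆ elicited T S := by
  intro st hst
  refine ⟨?_, fun G hG => conforms_L0Sat (happ G hG) hst⟩
  obtain ⟨A, hA, B, hB, R, hR, hc⟩ := hst
  have hA' : A ∈ T.nlabels := by rw [← hover.1]; exact hA
  have hB' : B ∈ T.nlabels := by rw [← hover.1]; exact hB
  have hR' : SRole.base R ∈ T.elabels := by rw [← hover.2.1]; exact hR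
  rcases hc with ⟨-, rfl⟩ | ⟨-, rfl⟩ | ⟨-, rfl⟩ <;> exact ⟨hA', hR', hB'⟩

end Elicitation

/-- Target schema elicitation. For `T` trimmed modulo `S` with
`(T,S) ⊨ ⊤ ⊑ ⊔Γ_T`, the set `𝒯` of all L0 statements over `Γ_T`, `Σ_T`
satisfied by all outputs is coherent, corresponds to a unique schema `S'` over
`Γ_T`, `Σ_T`, and that `S'` is the containment-minimal target schema. -/
theorem schema_elicitation {N E : Type} {F : Constructors N}
    (S : Schema N E) (T : Transformation N E F)
    (htrim : T.Trimmed S) (htop : TopCovered T S) :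
    Coherent (elicited T S) ∧
    (∃! S' : Schema N E, S'.Over T.nlabels T.elabels ∧ schemaL0 S' = elicited T S) ∧
    ∀ S' : Schema N E, S'.Over T.nlabels T.elabels → schemaL0 S' = elicited T S →
      ((∀ G ∈ L S, T.apply G ∈ L S') ∧
       ∀ S'' : Schema N E, S''.Over T.nlabels T.elabels →
         (∀ G ∈ L S, T.apply G ∈ L S'') → L S' ⊆ L S'') := by
  classical
  have hcoh : Coherent (elicited T S) := elicited_coherent htrim
  refine ⟨hcoh, ⟨elicitSchema T S, ⟨elicit_over T S, elicit_L0 T S hcoh⟩,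
    fun S₀ h₀ => schema_unique hcoh h₀.1 h₀.2⟩, ?_⟩
  intro S' hover' hL0'
  refine ⟨fun G hG => apply_conforms htop hover' hL0' hG, ?_⟩
  intro S'' hover'' happ H hH
  have hsub : schemaL0 S'' ⊆ schemaL0 S' := by
    rw [hL0']; exact schemaL0_sub_elicited hover'' happ
  have hnl : S'.nlab = S''.nlab :=
    Finset.coe_injective (hover'.1.trans hover''.1.symm)
  have hel : S'.elabs = S''.elabs :=
    Finset.coe_injective (hover'.2.1.trans hover''.2.1.symm)
  refine ⟨hH.1, hH.2.1, fun A h => hnl ▸ hH.2.2.1 A h, fun r h => hel ▸ hH.2.2.2.1 r h, ?_⟩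
  intro A hA B hB R hR u hu
  exact card_ok_of_L0 hH.1.1 (fun st hst => conforms_L0Sat hH (hsub hst)) hA hB hR hu

end GDB
end

section
/- Let S be a schema and T₁, T₂ two graph transformations that are both trimmed modulo S. Then T₁ ≡_S T₂ (i.e., T₁(G) = T₂(G) for every G ∈ L(S)) if and only if: (1) Γ_{T₁} = Γ_{T₂} and Σ_{T₁} = Σ_{T₂}; (2) Q_A^{T₁}(x̄) ≡_S Q_A^{T₂}(x̄) for every A ∈ Γ_{T₁}; and (3) Q_{A,r,B}^{T₁}(x̄,ȳ) ≡_S Q_{A,r,B}^{T₂}(x̄,ȳ) for all A, B ∈ Γ_{T₁} and r ∈ Σ_{T₁}, where P ≡_S Q means P ⊆_S Q and Q ⊆_S P. -/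
namespace GDB

variable {N E : Type}

section Aux

variable {N E : Type} {F : Constructors N}

private lemma Graph.ext' {G₁ G₂ : Graph N E} (h1 : G₁.dom = G₂.dom)
    (h2 : G₁.nodeLab = G₂.nodeLab) (h3 : G₁.edgeRel = G₂.edgeRel) : G₁ = G₂ := by
  cases G₁; cases G₂; simp_all

private lemma mem_nodeLab_iff (T : Transformation N E F) (G : Graph N E) (A : N) (u : ℕ) :
    u ∈ (T.apply G).nodeLab A ↔ ∃ t ∈ QAans T A G, u = F.f A t := by
  constructor
  · rintro ⟨ρ, hρ, h, t, ht, rfl⟩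
    subst h
    exact ⟨t, ⟨ρ, hρ, rfl, ht⟩, rfl⟩
  · rintro ⟨t, ⟨ρ, hρ, h, ht⟩, rfl⟩
    subst h
    exact ⟨ρ, hρ, rfl, t, ht, rfl⟩

private lemma mem_edgeRel_iff (T : Transformation N E F) (G : Graph N E) (r : E) (u v : ℕ) :
    (u, v) ∈ (T.apply G).edgeRel r ↔
      ∃ A B, ∃ ts ∈ QABans T A (SRole.fwd r) B G, u = F.f A ts.1 ∧ v = F.f B ts.2 := by
  constructor
  · rintro ⟨ρ, hρ, hl, t, ht, h1, h2⟩
    subst hl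
    refine ⟨ρ.src, ρ.tgt, ⟨fun i => t (Sum.inl i), fun i => t (Sum.inr i)⟩,
      ⟨ρ, hρ, rfl, rfl, rfl, ?_⟩, h1, h2⟩
    have he : (Sum.elim (fun i => t (Sum.inl i)) (fun i => t (Sum.inr i)) :
        Fin (F.arity ρ.src) ⊕ Fin (F.arity ρ.tgt) → ℕ) = t := by
      funext x; cases x <;> rfl
    exact he ▸ ht
  · rintro ⟨A, B, ts, ⟨ρ, hρ, hl, h1, h2, ht⟩, hu, hv⟩
    subst hl; subst h1; subst h2
    exact ⟨ρ, hρ, rfl, Sum.elim ts.1 ts.2, ht, hu, hv⟩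

private lemma apply_dom_eq (T : Transformation N E F) (G : Graph N E) :
    (T.apply G).dom = {u | (∃ A, u ∈ (T.apply G).nodeLab A) ∨
      ∃ r v, (u, v) ∈ (T.apply G).edgeRel r ∨ (v, u) ∈ (T.apply G).edgeRel r} := by
  ext u
  constructor
  · rintro (⟨ρ, hρ, t, ht, rfl⟩ | ⟨ρ, hρ, t, ht, (rfl | rfl)⟩)
    · exact Or.inl ⟨ρ.head, ρ, hρ, rfl, t, ht, rfl⟩
    · exact Or.inr ⟨ρ.lab, F.f ρ.tgt (fun i => t (Sum.inr i)),
        Or.inl ⟨ρ, hρ, rfl, t, ht, rfl, rfl⟩⟩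
    · exact Or.inr ⟨ρ.lab, F.f ρ.src (fun i => t (Sum.inl i)),
        Or.inr ⟨ρ, hρ, rfl, t, ht, rfl, rfl⟩⟩
  · rintro (⟨A, ρ, hρ, hA, t, ht, rfl⟩ |
      ⟨r, v, (⟨ρ, hρ, hl, t, ht, h1, h2⟩ | ⟨ρ, hρ, hl, t, ht, h1, h2⟩)⟩)
    · exact Or.inl ⟨ρ, hρ, t, ht, rfl⟩
    · exact Or.inr ⟨ρ, hρ, t, ht, Or.inl h1⟩
    · exact Or.inr ⟨ρ, hρ, t, ht, Or.inr h2⟩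

private lemma QAans_label {T : Transformation N E F} {A : N} {G : Graph N E}
    {t : Fin (F.arity A) → ℕ} (ht : t ∈ QAans T A G) : A ∈ T.nlabels := by
  obtain ⟨ρ, hρ, h, -⟩ := ht
  exact Or.inl ⟨ρ, hρ, h⟩

private lemma QABans_label {T : Transformation N E F} {A B : N} {r : E} {G : Graph N E}
    {ts : (Fin (F.arity A) → ℕ) × (Fin (F.arity B) → ℕ)}
    (hts : ts ∈ QABans T A (SRole.fwd r) B G) :
    A ∈ T.nlabels ∧ B ∈ T.nlabels ∧ r ∈ T.elabels := by
  obtain ⟨ρ, hρ, hl, h1, h2, -⟩ := hts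
  exact ⟨Or.inr ⟨ρ, hρ, Or.inl h1⟩, Or.inr ⟨ρ, hρ, Or.inr h2⟩, ⟨ρ, hρ, hl⟩⟩

private lemma QAans_sub {S : Schema N E} {T₁ T₂ : Transformation N E F}
    (heq : ∀ G ∈ L S, T₁.apply G = T₂.apply G) (A : N) {G : Graph N E} (hG : G ∈ L S) :
    QAans T₁ A G ⊆ QAans T₂ A G := by
  intro t ht
  have hu : F.f A t ∈ (T₁.apply G).nodeLab A := (mem_nodeLab_iff T₁ G A _).2 ⟨t, ht, rfl⟩
  rw [heq G hG] at hu
  obtain ⟨t', ht', hft⟩ := (mem_nodeLab_iff T₂ G A _).1 hu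
  rwa [F.inj A hft]

private lemma QABans_sub {S : Schema N E} {T₁ T₂ : Transformation N E F}
    (heq : ∀ G ∈ L S, T₁.apply G = T₂.apply G) (A B : N) (r : E)
    {G : Graph N E} (hG : G ∈ L S) :
    QABans T₁ A (SRole.fwd r) B G ⊆ QABans T₂ A (SRole.fwd r) B G := by
  intro ts hts
  have he : (F.f A ts.1, F.f B ts.2) ∈ (T₁.apply G).edgeRel r :=
    (mem_edgeRel_iff T₁ G r _ _).2 ⟨A, B, ts, hts, rfl, rfl⟩
  rw [heq G hG] at he
  obtain ⟨A', B', ts', hts', hu, hv⟩ := (mem_edgeRel_iff T₂ G r _ _).1 he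
  have hA : A' = A := by
    by_contra hne
    exact F.disj A' A hne ts'.1 ts.1 hu.symm
  have hB : B' = B := by
    by_contra hne
    exact F.disj B' B hne ts'.2 ts.2 hv.symm
  subst hA; subst hB
  have e1 : ts.1 = ts'.1 := F.inj A' hu
  have e2 : ts.2 = ts'.2 := F.inj B' hv
  have : ts = ts' := Prod.ext e1 e2
  rwa [this]

private lemma QAans_empty {T : Transformation N E F} {A : N} (hA : A ∉ T.nlabels)
    (G : Graph N E) : QAans T A G = ∅ := by
  ext t
  simp only [Set.mem_empty_iff_false, iff_false]
  exact fun ht => hA (QAans_label ht)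

end Aux

/-- Equivalence of trimmed transformations. `T₁ ≡_S T₂` iff the
head label sets coincide and the queries `Q_A` and `Q_{A,r,B}` of both
transformations are equivalent modulo `S`. -/
theorem equivalence_iff {N E : Type} {F : Constructors N}
    (S : Schema N E) (T₁ T₂ : Transformation N E F)
    (h₁ : T₁.Trimmed S) (h₂ : T₂.Trimmed S) :
    (∀ G ∈ L S, T₁.apply G = T₂.apply G) ↔
      (T₁.nlabels = T₂.nlabels ∧ T₁.elabels = T₂.elabels ∧
       (∀ A ∈ T₁.nlabels, ∀ G ∈ L S, QAans T₁ A G = QAans T₂ A G) ∧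
       (∀ A ∈ T₁.nlabels, ∀ B ∈ T₁.nlabels, ∀ r ∈ T₁.elabels, ∀ G ∈ L S,
          QABans T₁ A (SRole.fwd r) B G = QABans T₂ A (SRole.fwd r) B G)) := by
  constructor
  · intro heq
    have heq' : ∀ G ∈ L S, T₂.apply G = T₁.apply G := fun G hG => (heq G hG).symm
    refine ⟨?_, ?_, ?_, ?_⟩
    · -- nlabels equal
      apply Set.Subset.antisymm
      · intro A hA
        obtain ⟨ρ, hρ, hh⟩ := h₁.2.2.1 A hA
        obtain ⟨G, hG, t, ht⟩ := h₁.1 ρ hρ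
        subst hh
        have htQ : t ∈ QAans T₁ ρ.head G := ⟨ρ, hρ, rfl, ht⟩
        exact QAans_label (QAans_sub heq ρ.head hG htQ)
      · intro A hA
        obtain ⟨ρ, hρ, hh⟩ := h₂.2.2.1 A hA
        obtain ⟨G, hG, t, ht⟩ := h₂.1 ρ hρ
        subst hh
        have htQ : t ∈ QAans T₂ ρ.head G := ⟨ρ, hρ, rfl, ht⟩
        exact QAans_label (QAans_sub heq' ρ.head hG htQ)
    · -- elabels equal
      have key : ∀ (Ta Tb : Transformation N E F), Ta.Trimmed S →
          (∀ G ∈ L S, Ta.apply G = Tb.apply G) → Ta.elabels ⊆ Tb.elabels := by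
        intro Ta Tb hTa hab r hr
        obtain ⟨ρ, hρ, hl⟩ := hTa.2.2.2 r hr
        obtain ⟨G, hG, t, ht⟩ := hTa.2.1 ρ hρ
        subst hl
        have hts : (⟨fun i => t (Sum.inl i), fun i => t (Sum.inr i)⟩ :
            (Fin (F.arity ρ.src) → ℕ) × (Fin (F.arity ρ.tgt) → ℕ)) ∈
            QABans Ta ρ.src (SRole.fwd ρ.lab) ρ.tgt G := by
          refine ⟨ρ, hρ, rfl, rfl, rfl, ?_⟩
          have he : (Sum.elim (fun i => t (Sum.inl i)) (fun i => t (Sum.inr i)) :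
              Fin (F.arity ρ.src) ⊕ Fin (F.arity ρ.tgt) → ℕ) = t := by
            funext x; cases x <;> rfl
          exact he ▸ ht
        exact (QABans_label (QABans_sub hab ρ.src ρ.tgt ρ.lab hG hts)).2.2
      exact Set.Subset.antisymm (key T₁ T₂ h₁ heq) (key T₂ T₁ h₂ heq')
    · intro A _ G hG
      exact Set.Subset.antisymm (QAans_sub heq A hG) (QAans_sub heq' A hG)
    · intro A _ B _ r _ G hG
      exact Set.Subset.antisymm (QABans_sub heq A B r hG) (QABans_sub heq' A B r hG)
  · rintro ⟨hn, he, hQA, hQAB⟩ G hG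
    have hQA' : ∀ A, QAans T₁ A G = QAans T₂ A G := by
      intro A
      by_cases hA : A ∈ T₁.nlabels
      · exact hQA A hA G hG
      · rw [QAans_empty hA, QAans_empty (hn ▸ hA)]
    have hnode : (T₁.apply G).nodeLab = (T₂.apply G).nodeLab := by
      funext A
      ext u
      rw [mem_nodeLab_iff, mem_nodeLab_iff, hQA']
    have hedge : (T₁.apply G).edgeRel = (T₂.apply G).edgeRel := by
      funext r
      ext ⟨u, v⟩
      rw [mem_edgeRel_iff, mem_edgeRel_iff]
      constructor
      · rintro ⟨A, B, ts, hts, hu, hv⟩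
        obtain ⟨hA, hB, hr⟩ := QABans_label hts
        exact ⟨A, B, ts, (hQAB A hA B hB r hr G hG) ▸ hts, hu, hv⟩
      · rintro ⟨A, B, ts, hts, hu, hv⟩
        obtain ⟨hA, hB, hr⟩ := QABans_label hts
        rw [← hn] at hA hB
        rw [← he] at hr
        exact ⟨A, B, ts, (hQAB A hA B hB r hr G hG) ▸ hts, hu, hv⟩
    refine Graph.ext' ?_ hnode hedge
    rw [apply_dom_eq, apply_dom_eq, hnode, hedge]

end GDB
end

section
/- Let S be a schema and 𝒯 an S-driven Horn-ALCIF TBox. Then there exists a Horn-ALCIF TBox 𝒯' with exactly the same (finite or infinite) models as 𝒯 such that all at-most constraints in 𝒯' are of the form A ⊑ ∃≤1 R.A' with A, A' ∈ Γ_S single concept names and R ∈ Σ_S±; in particular 𝒯' contains at most |Σ_S±|·|Γ_S|² at-most constraints. -/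
namespace GDB

variable {N E : Type}

/-- Every S-driven Horn-ALCIF TBox (over the signature of `S`)
can be simplified, preserving all (finite or infinite) models, so that all its
at-most constraints are of the form `A ⊑ ∃≤1 R.A'` with `A, A' ∈ Γ_S` and
`R ∈ Σ_S±`; in particular it has at most `|Σ_S±|·|Γ_S|²` at-most constraints. -/
theorem simplify_sdriven {N E : Type} (S : Schema N E) (T : Set (HornCI N E))
    (hroles : ∀ ci ∈ T, ∀ R ∈ HornCI.roles ci, SRole.base R ∈ S.elabs)
    (hsd : SDriven S T) :
    ∃ T' : Set (HornCI N E),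
      (∀ G : Graph N E, HornModels G T' ↔ HornModels G T) ∧
      (∀ K (R : SRole E) K', HornCI.le1 K R K' ∈ T' →
        ∃ A ∈ S.nlab, ∃ A' ∈ S.nlab, K = [A] ∧ K' = [A'] ∧ SRole.base R ∈ S.elabs) ∧
      {ci ∈ T' | ∃ K, ∃ R : SRole E, ∃ K', ci = HornCI.le1 K R K'}.Finite ∧
      {ci ∈ T' | ∃ K, ∃ R : SRole E, ∃ K', ci = HornCI.le1 K R K'}.ncard ≤
        (2 * S.elabs.card) * S.nlab.card ^ 2 := by
  classical
  refine ⟨{ci | ci ∈ T ∧ ∀ K (R : SRole E) K', ci ≠ HornCI.le1 K R K'} ∪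
    {ci | ∃ A ∈ S.nlab, ∃ A' ∈ S.nlab, ∃ R : SRole E,
        ci = HornCI.le1 [A] R [A'] ∧ ci ∈ T} ∪
    {ci | ∃ K, ∃ R : SRole E, ∃ K', HornCI.le1 K R K' ∈ T ∧
        ¬ TripleSat T K R K' ∧ ci = HornCI.nex K R K'}, ?_, ?_, ?_⟩
  · -- same models
    intro G
    constructor
    · -- models of T' are models of T
      intro hG ci hci
      by_cases hle : ∃ K, ∃ R : SRole E, ∃ K', ci = HornCI.le1 K R K'
      · obtain ⟨K, R, K', rfl⟩ := hle
        by_cases hts : TripleSat T K R K'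
        · obtain ⟨A, hA, A', hA', hAK, hA'K', hmem⟩ := hsd.2 K R K' hci hts
          have hsat : HornCI.Sat G (HornCI.le1 [A] R [A']) := by
            apply hG
            exact Or.inl (Or.inr ⟨A, hA, A', hA', R, rfl, hmem⟩)
          intro u hu
          have huA : conjSat G [A] u := by
            refine ⟨hu.1, fun B hB => ?_⟩
            rw [List.mem_singleton] at hB
            rw [hB]
            exact hu.2 A hAK
          have hss := hsat u huA
          intro v hv w hw
          have hvA : (u, v) ∈ G.srel R ∧ conjSat G [A'] v := by
            refine ⟨hv.1, hv.2.1, fun B hB => ?_⟩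
            rw [List.mem_singleton] at hB
            rw [hB]
            exact hv.2.2 A' hA'K'
          have hwA : (u, w) ∈ G.srel R ∧ conjSat G [A'] w := by
            refine ⟨hw.1, hw.2.1, fun B hB => ?_⟩
            rw [List.mem_singleton] at hB
            rw [hB]
            exact hw.2.2 A' hA'K'
          exact hss hvA hwA
        · have hnex : HornCI.Sat G (HornCI.nex K R K') := by
            apply hG
            exact Or.inr ⟨K, R, K', hci, hts, rfl⟩
          intro u hu v hv w hw
          exact absurd ⟨v, hv.1, hv.2⟩ (hnex u hu)
      · apply hG
        exact Or.inl (Or.inl ⟨hci, fun K R K' h => hle ⟨K, R, K', h⟩⟩)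
    · -- models of T are models of T'
      intro hG ci hci
      rcases hci with (⟨hciT, -⟩ | ⟨A, -, A', -, R, -, hciT⟩) | ⟨K, R, K', -, hts, rfl⟩
      · exact hG ci hciT
      · exact hG ci hciT
      · intro u hu hv
        obtain ⟨v, hv1, hv2⟩ := hv
        exact hts ⟨G, hG, u, v, hu, hv1, hv2⟩
  · -- shape of at-most constraints
    intro K R K' hmem
    rcases hmem with (⟨-, hne⟩ | ⟨A, hA, A', hA', R₀, heq, hciT⟩) | ⟨K₀, R₀, K₀', -, -, heq⟩
    · exact absurd rfl (hne K R K')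
    · injection heq with h1 h2 h3
      refine ⟨A, hA, A', hA', h1, h3, ?_⟩
      rw [h2]
      have := hroles _ hciT R₀
      simp only [HornCI.roles] at this
      exact this (by rw [Set.mem_singleton_iff, h2])
    · exact absurd heq (by simp)
  · -- finiteness and cardinality
    have hsub : ∀ ci ∈ ({ci | ci ∈ T ∧ ∀ K (R : SRole E) K', ci ≠ HornCI.le1 K R K'} ∪
        {ci | ∃ A ∈ S.nlab, ∃ A' ∈ S.nlab, ∃ R : SRole E,
            ci = HornCI.le1 [A] R [A'] ∧ ci ∈ T} ∪
        {ci | ∃ K, ∃ R : SRole E, ∃ K', HornCI.le1 K R K' ∈ T ∧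
            ¬ TripleSat T K R K' ∧ ci = HornCI.nex K R K'} : Set (HornCI N E)),
        (∃ K, ∃ R : SRole E, ∃ K', ci = HornCI.le1 K R K') →
        ci ∈ ((S.nlab ×ˢ ((S.elabs.image SRole.fwd ∪ S.elabs.image SRole.bwd) ×ˢ S.nlab)).image
          (fun p => HornCI.le1 [p.1] p.2.1 [p.2.2]) : Finset (HornCI N E)) := by
      rintro ci hmem ⟨K, R, K', rfl⟩
      rcases hmem with (⟨-, hne⟩ | ⟨A, hA, A', hA', R₀, heq, hciT⟩) | ⟨K₀, R₀, K₀', -, -, heq⟩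
      · exact absurd rfl (hne K R K')
      · injection heq with h1 h2 h3
        rw [h1, h2, h3]
        have hRb : SRole.base R₀ ∈ S.elabs := by
          have := hroles _ hciT R₀
          simp only [HornCI.roles] at this
          exact this (by rw [Set.mem_singleton_iff, h2])
        have hRmem : R₀ ∈ S.elabs.image SRole.fwd ∪ S.elabs.image SRole.bwd := by
          cases R₀ with
          | fwd r => exact Finset.mem_union_left _ (Finset.mem_image_of_mem _ hRb)
          | bwd r => exact Finset.mem_union_right _ (Finset.mem_image_of_mem _ hRb)
        refine Finset.mem_image.2 ⟨(A, R₀, A'), ?_, rfl⟩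
        rw [Finset.mem_product, Finset.mem_product]
        exact ⟨hA, hRmem, hA'⟩
      · exact absurd heq (by simp)
    have hsub' : {ci ∈ ({ci | ci ∈ T ∧ ∀ K (R : SRole E) K', ci ≠ HornCI.le1 K R K'} ∪
        {ci | ∃ A ∈ S.nlab, ∃ A' ∈ S.nlab, ∃ R : SRole E,
            ci = HornCI.le1 [A] R [A'] ∧ ci ∈ T} ∪
        {ci | ∃ K, ∃ R : SRole E, ∃ K', HornCI.le1 K R K' ∈ T ∧
            ¬ TripleSat T K R K' ∧ ci = HornCI.nex K R K'} : Set (HornCI N E)) |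
          ∃ K, ∃ R : SRole E, ∃ K', ci = HornCI.le1 K R K'} ⊆
        ↑((S.nlab ×ˢ ((S.elabs.image SRole.fwd ∪ S.elabs.image SRole.bwd) ×ˢ S.nlab)).image
          (fun p => HornCI.le1 [p.1] p.2.1 [p.2.2]) : Finset (HornCI N E)) := by
      rintro ci ⟨h1, h2⟩
      exact hsub ci h1 h2
    have hfin := (Finset.finite_toSet
      ((S.nlab ×ˢ ((S.elabs.image SRole.fwd ∪ S.elabs.image SRole.bwd) ×ˢ S.nlab)).image
        (fun p : N × SRole E × N => HornCI.le1 [p.1] p.2.1 [p.2.2])))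
    refine ⟨hfin.subset hsub', ?_⟩
    have hcard : ((S.nlab ×ˢ ((S.elabs.image SRole.fwd ∪ S.elabs.image SRole.bwd) ×ˢ S.nlab)).image
        (fun p : N × SRole E × N => HornCI.le1 [p.1] p.2.1 [p.2.2])).card ≤
        (2 * S.elabs.card) * S.nlab.card ^ 2 := by
      calc ((S.nlab ×ˢ ((S.elabs.image SRole.fwd ∪ S.elabs.image SRole.bwd) ×ˢ S.nlab)).image
            (fun p : N × SRole E × N => HornCI.le1 [p.1] p.2.1 [p.2.2])).card
          ≤ (S.nlab ×ˢ ((S.elabs.image SRole.fwd ∪ S.elabs.image SRole.bwd) ×ˢ S.nlab)).card :=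
            Finset.card_image_le
        _ = S.nlab.card * ((S.elabs.image SRole.fwd ∪ S.elabs.image SRole.bwd).card * S.nlab.card) := by
            rw [Finset.card_product, Finset.card_product]
        _ ≤ S.nlab.card * ((2 * S.elabs.card) * S.nlab.card) := by
            apply Nat.mul_le_mul_left
            apply Nat.mul_le_mul_right
            calc (S.elabs.image SRole.fwd ∪ S.elabs.image SRole.bwd).card
                ≤ (S.elabs.image SRole.fwd).card + (S.elabs.image SRole.bwd).card :=
                  Finset.card_union_le _ _
              _ ≤ S.elabs.card + S.elabs.card :=
                  Nat.add_le_add Finset.card_image_le Finset.card_image_le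
              _ = 2 * S.elabs.card := (two_mul _).symm
        _ = (2 * S.elabs.card) * S.nlab.card ^ 2 := by ring
    calc _ ≤ _ := Set.ncard_le_ncard hsub' hfin
      _ = _ := Set.ncard_coe_finset _
      _ ≤ _ := hcard

end GDB
end
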